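/- Perm algebras satisfy the Dong property (the di-replication of the commutative case): if A is a Perm algebra over a field k of characteristic 0 with product μ, and a, b, c are pairwise mutually μ-local formal distributions over A, then for every n ∈ ℕ both ordered pairs (a ∘_{μ,n} b, c) and (c, a ∘_{μ,n} b) are μ-local. -/

import Mathlib

open Finset

section DongHelpers

/-! ### Generic lemmas about additive endomorphisms -/

private lemma end_mul_apply {F : Type*} [AddCommGroup F] (f g : AddMonoid.End F) (x : F) :
    (f * g) x = f (g x) := rfl

private lemma end_one_apply {F : Type*} [AddCommGroup F] (x : F) :
    (1 : AddMonoid.End F) x = x := rfl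

private lemma endPow_apply_zero {F : Type*} [AddCommGroup F] (t : AddMonoid.End F) {N M : ℕ}
    (h : N ≤ M) (g : F) (h0 : (t ^ N) g = 0) : (t ^ M) g = 0 := by
  have hM : t ^ M = t ^ (M - N) * t ^ N := by rw [← pow_add]; congr 1; omega
  rw [hM, end_mul_apply, h0, map_zero]

private lemma neg_endPow_apply {F : Type*} [AddCommGroup F] (v : AddMonoid.End F) (s : ℕ) (g : F) :
    ((-v) ^ s) g = ((-1 : ℤ) ^ s) • ((v ^ s) g) := by
  induction s generalizing g with
  | zero => simp [end_one_apply]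
  | succ s ih =>
    rw [pow_succ (-v) s, end_mul_apply, show (-v) g = -(v g) from rfl, map_neg, ih (v g),
      pow_succ v s, end_mul_apply, pow_succ (-1 : ℤ) s, mul_neg_one, neg_smul]

private lemma sub_pow_apply {F : Type*} [AddCommGroup F] {u v : AddMonoid.End F}
    (h : Commute u v) (N : ℕ) (g : F) :
    ((u - v) ^ N) g = ∑ s ∈ Finset.range (N + 1),
      ((-1 : ℤ) ^ s * (N.choose s : ℤ)) • ((u ^ (N - s)) ((v ^ s) g)) := by
  have h2 : Commute (-v) u := h.symm.neg_left
  rw [← neg_add_eq_sub, h2.add_pow]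
  rw [show ∀ (t : Finset ℕ) (f : ℕ → AddMonoid.End F), (∑ i ∈ t, f i) g = ∑ i ∈ t, f i g from
    fun t f => by
      induction t using Finset.induction_on with
      | empty => rfl
      | insert a t ha ih => rw [Finset.sum_insert ha, Finset.sum_insert ha, ← ih]; rfl]
  refine Finset.sum_congr rfl fun s hs => ?_
  rw [end_mul_apply, end_mul_apply, AddMonoid.End.natCast_apply, map_nsmul, map_nsmul,
    neg_endPow_apply]
  have hswap : (v ^ s) ((u ^ (N - s)) g) = (u ^ (N - s)) ((v ^ s) g) := by
    rw [← end_mul_apply, (h.symm.pow_pow s (N - s)).eq, end_mul_apply]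
  rw [hswap, ← natCast_zsmul, smul_smul, mul_comm]

private lemma kill_sub_pow {F : Type*} [AddCommGroup F] {x y : AddMonoid.End F}
    (h : Commute x y) (N : ℕ) (g : F)
    (hx : (x ^ N) g = 0) (hy : (y ^ N) g = 0) : ((x - y) ^ (2 * N)) g = 0 := by
  rw [sub_pow_apply h]
  refine Finset.sum_eq_zero fun s hs => ?_
  rcases le_or_gt N s with hsN | hsN
  · rw [endPow_apply_zero y hsN g hy, map_zero, smul_zero]
  · have hswap : (x ^ (2 * N - s)) ((y ^ s) g) = (y ^ s) ((x ^ (2 * N - s)) g) := by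
      rw [← end_mul_apply, (h.pow_pow (2 * N - s) s).eq, end_mul_apply]
    rw [hswap, endPow_apply_zero x (by omega) g hx, map_zero, smul_zero]

/-! ### Concrete shift operators -/

variable {A : Type*} [AddCommGroup A]

private def D1 : AddMonoid.End (ℤ → ℤ → A) :=
  AddMonoidHom.mk' (fun f m p => f (m + 1) p) (fun _ _ => rfl)

private def D2 : AddMonoid.End (ℤ → ℤ → A) :=
  AddMonoidHom.mk' (fun f m p => f m (p + 1)) (fun _ _ => rfl)

private def E1 : AddMonoid.End (ℤ → ℤ → ℤ → A) :=
  AddMonoidHom.mk' (fun f r m p => f (r + 1) m p) (fun _ _ => rfl)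

private def E2 : AddMonoid.End (ℤ → ℤ → ℤ → A) :=
  AddMonoidHom.mk' (fun f r m p => f r (m + 1) p) (fun _ _ => rfl)

private def E3 : AddMonoid.End (ℤ → ℤ → ℤ → A) :=
  AddMonoidHom.mk' (fun f r m p => f r m (p + 1)) (fun _ _ => rfl)

private lemma commD12 : Commute (D1 (A := A)) D2 := AddMonoidHom.ext fun _ => rfl
private lemma commE12 : Commute (E1 (A := A)) E2 := AddMonoidHom.ext fun _ => rfl
private lemma commE13 : Commute (E1 (A := A)) E3 := AddMonoidHom.ext fun _ => rfl
private lemma commE23 : Commute (E2 (A := A)) E3 := AddMonoidHom.ext fun _ => rfl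

private lemma D1_pow (k : ℕ) (f : ℤ → ℤ → A) (m p : ℤ) :
    ((D1 ^ k) f) m p = f (m + k) p := by
  induction k generalizing f with
  | zero => simp [end_one_apply]
  | succ k ih =>
    have hc : (m + ((k + 1 : ℕ) : ℤ)) = (m + k) + 1 := by push_cast; ring
    rw [pow_succ, end_mul_apply, ih (D1 f), hc]; rfl

private lemma D2_pow (k : ℕ) (f : ℤ → ℤ → A) (m p : ℤ) :
    ((D2 ^ k) f) m p = f m (p + k) := by
  induction k generalizing f with
  | zero => simp [end_one_apply]
  | succ k ih =>
    have hc : (p + ((k + 1 : ℕ) : ℤ)) = (p + k) + 1 := by push_cast; ring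
    rw [pow_succ, end_mul_apply, ih (D2 f), hc]; rfl

private lemma E1_pow (k : ℕ) (f : ℤ → ℤ → ℤ → A) (r m p : ℤ) :
    ((E1 ^ k) f) r m p = f (r + k) m p := by
  induction k generalizing f with
  | zero => simp [end_one_apply]
  | succ k ih =>
    have hc : (r + ((k + 1 : ℕ) : ℤ)) = (r + k) + 1 := by push_cast; ring
    rw [pow_succ, end_mul_apply, ih (E1 f), hc]; rfl

private lemma E2_pow (k : ℕ) (f : ℤ → ℤ → ℤ → A) (r m p : ℤ) :
    ((E2 ^ k) f) r m p = f r (m + k) p := by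
  induction k generalizing f with
  | zero => simp [end_one_apply]
  | succ k ih =>
    have hc : (m + ((k + 1 : ℕ) : ℤ)) = (m + k) + 1 := by push_cast; ring
    rw [pow_succ, end_mul_apply, ih (E2 f), hc]; rfl

private lemma E3_pow (k : ℕ) (f : ℤ → ℤ → ℤ → A) (r m p : ℤ) :
    ((E3 ^ k) f) r m p = f r m (p + k) := by
  induction k generalizing f with
  | zero => simp [end_one_apply]
  | succ k ih =>
    have hc : (p + ((k + 1 : ℕ) : ℤ)) = (p + k) + 1 := by push_cast; ring
    rw [pow_succ, end_mul_apply, ih (E3 f), hc]; rfl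

private lemma evalD (K : ℕ) (f : ℤ → ℤ → A) (m p : ℤ) :
    (((D1 - D2 : AddMonoid.End (ℤ → ℤ → A)) ^ K) f) m p = ∑ s ∈ Finset.range (K + 1),
      ((-1 : ℤ) ^ s * (K.choose s : ℤ)) • f (m + (K : ℤ) - (s : ℤ)) (p + (s : ℤ)) := by
  rw [sub_pow_apply commD12]
  simp only [Finset.sum_apply, Pi.smul_apply]
  refine Finset.sum_congr rfl fun s hs => ?_
  rw [D1_pow, D2_pow]
  have hs' : s ≤ K := Nat.lt_succ_iff.mp (Finset.mem_range.mp hs)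
  have hc : (m + ((K - s : ℕ) : ℤ)) = m + (K : ℤ) - (s : ℤ) := by omega
  rw [hc]

private lemma evalE12 (K : ℕ) (g : ℤ → ℤ → ℤ → A) (r m p : ℤ) :
    (((E1 - E2 : AddMonoid.End (ℤ → ℤ → ℤ → A)) ^ K) g) r m p = ∑ s ∈ Finset.range (K + 1),
      ((-1 : ℤ) ^ s * (K.choose s : ℤ)) • g (r + (K : ℤ) - (s : ℤ)) (m + (s : ℤ)) p := by
  rw [sub_pow_apply commE12]
  simp only [Finset.sum_apply, Pi.smul_apply]
  refine Finset.sum_congr rfl fun s hs => ?_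
  rw [E1_pow, E2_pow]
  have hs' : s ≤ K := Nat.lt_succ_iff.mp (Finset.mem_range.mp hs)
  have hc : (r + ((K - s : ℕ) : ℤ)) = r + (K : ℤ) - (s : ℤ) := by omega
  rw [hc]

private lemma evalE13 (K : ℕ) (g : ℤ → ℤ → ℤ → A) (r m p : ℤ) :
    (((E1 - E3 : AddMonoid.End (ℤ → ℤ → ℤ → A)) ^ K) g) r m p = ∑ s ∈ Finset.range (K + 1),
      ((-1 : ℤ) ^ s * (K.choose s : ℤ)) • g (r + (K : ℤ) - (s : ℤ)) m (p + (s : ℤ)) := by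
  rw [sub_pow_apply commE13]
  simp only [Finset.sum_apply, Pi.smul_apply]
  refine Finset.sum_congr rfl fun s hs => ?_
  rw [E1_pow, E3_pow]
  have hs' : s ≤ K := Nat.lt_succ_iff.mp (Finset.mem_range.mp hs)
  have hc : (r + ((K - s : ℕ) : ℤ)) = r + (K : ℤ) - (s : ℤ) := by omega
  rw [hc]

private lemma evalE23 (K : ℕ) (g : ℤ → ℤ → ℤ → A) (r m p : ℤ) :
    (((E2 - E3 : AddMonoid.End (ℤ → ℤ → ℤ → A)) ^ K) g) r m p = ∑ s ∈ Finset.range (K + 1),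
      ((-1 : ℤ) ^ s * (K.choose s : ℤ)) • g r (m + (K : ℤ) - (s : ℤ)) (p + (s : ℤ)) := by
  rw [sub_pow_apply commE23]
  simp only [Finset.sum_apply, Pi.smul_apply]
  refine Finset.sum_congr rfl fun s hs => ?_
  rw [E2_pow, E3_pow]
  have hs' : s ≤ K := Nat.lt_succ_iff.mp (Finset.mem_range.mp hs)
  have hc : (m + ((K - s : ℕ) : ℤ)) = m + (K : ℤ) - (s : ℤ) := by omega
  rw [hc]

private lemma stepD (h : ℤ → ℤ → A) (m p : ℤ) :
    ((D1 - D2 : AddMonoid.End (ℤ → ℤ → A)) h) m p = h (m + 1) p - h m (p + 1) := rfl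

private lemma stepE23 (h : ℤ → ℤ → ℤ → A) (r m p : ℤ) :
    ((E2 - E3 : AddMonoid.End (ℤ → ℤ → ℤ → A)) h) r m p = h r (m + 1) p - h r m (p + 1) := rfl

private lemma stepE13 (h : ℤ → ℤ → ℤ → A) (r m p : ℤ) :
    ((E1 - E3 : AddMonoid.End (ℤ → ℤ → ℤ → A)) h) r m p = h (r + 1) m p - h r m (p + 1) := rfl

end DongHelpers

/-- The ordered pair of formal distributions `(a, b)` over `A` is `μ`-local:
there is `N` with `(w - z)^N μ(a(w), b(z)) = 0`, encoded coefficient-wise. -/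
def IsLocalPair {A : Type*} [AddCommGroup A] (μ : A → A → A) (a b : ℤ → A) : Prop :=
  ∃ N : ℕ, ∀ m p : ℤ,
    ∑ s ∈ Finset.range (N + 1),
      ((-1 : ℤ) ^ s * (N.choose s : ℤ)) • μ (a (m + (N : ℤ) - (s : ℤ))) (b (p + (s : ℤ))) = 0

/-- The `n`-th `μ`-product `a ∘_{μ,n} b` of formal distributions,
encoding `Res_{ξ=0} (ξ - w)^n μ(a(ξ), b(w))`. -/
def NthProduct {A : Type*} [AddCommGroup A] (μ : A → A → A) (n : ℕ) (a b : ℤ → A) : ℤ → A :=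
  fun m => ∑ j ∈ Finset.range (n + 1),
    ((-1 : ℤ) ^ j * (n.choose j : ℤ)) • μ (a ((n : ℤ) - (j : ℤ))) (b (m + (j : ℤ)))

/-- Three formal distributions `a, b, c` are pairwise mutually `μ`-local. -/
def PairwiseMutuallyLocal {A : Type*} [AddCommGroup A] (μ : A → A → A) (a b c : ℤ → A) : Prop :=
  IsLocalPair μ a b ∧ IsLocalPair μ b a ∧ IsLocalPair μ a c ∧ IsLocalPair μ c a ∧
    IsLocalPair μ b c ∧ IsLocalPair μ c b

/-- `μ : A → A → A` is `k`-bilinear. -/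
def IsBilinear (k : Type*) [Field k] {A : Type*} [AddCommGroup A] [Module k A]
    (μ : A → A → A) : Prop :=
  (∀ x y z : A, μ (x + y) z = μ x z + μ y z) ∧
    (∀ x y z : A, μ x (y + z) = μ x y + μ x z) ∧
    (∀ (r : k) (x y : A), μ (r • x) y = r • μ x y) ∧
    (∀ (r : k) (x y : A), μ x (r • y) = r • μ x y)

section DongMain

variable {A : Type*} [AddCommGroup A]

/-- Right multiplication as an additive hom. -/
private def Rmul (μ : A → A → A) (hadd : ∀ x y z : A, μ (x + y) z = μ x z + μ y z) (y : A) :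
    A →+ A :=
  AddMonoidHom.mk' (fun x => μ x y) (fun u v => hadd u v y)

/-- Left multiplication as an additive hom. -/
private def Lmul (μ : A → A → A) (hadd : ∀ x y z : A, μ x (y + z) = μ x y + μ x z) (x : A) :
    A →+ A :=
  AddMonoidHom.mk' (fun y => μ x y) (fun u v => hadd x u v)

end DongMain

set_option maxHeartbeats 1000000 in
/-- Perm algebras satisfy the Dong property. -/
theorem perm_dong_property (k : Type*) [Field k] [CharZero k]
    (A : Type*) [AddCommGroup A] [Module k A]
    (μ : A → A → A) (hbil : IsBilinear k μ)
    (hassoc : ∀ x y z : A, μ (μ x y) z = μ x (μ y z))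
    (hlcom : ∀ x y z : A, μ (μ x y) z = μ (μ y x) z)
    (a b c : ℤ → A) (hloc : PairwiseMutuallyLocal μ a b c) (n : ℕ) :
    IsLocalPair μ (NthProduct μ n a b) c ∧ IsLocalPair μ c (NthProduct μ n a b) := by
  obtain ⟨⟨Nab, hab⟩, -, ⟨Nac, hac⟩, ⟨Nca, hca⟩, -, -⟩ := hloc
  obtain ⟨hadd1, hadd2, -, -⟩ := hbil
  have hperm : ∀ x y z : A, μ (μ x y) z = μ y (μ x z) := fun x y z =>
    (hlcom x y z).trans (hassoc y x z)
  set N := (Nab ⊔ Nac) ⊔ Nca with hN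
  have hNab : Nab ≤ N := le_trans le_sup_left le_sup_left
  have hNac : Nac ≤ N := le_trans le_sup_right le_sup_left
  have hNca : Nca ≤ N := le_sup_right
  constructor
  · -- locality of (a ∘ₙ b, c)
    set g : ℤ → ℤ → ℤ → A := fun r m p => μ (μ (a r) (b m)) (c p) with hg
    have h12 : ((E1 - E2 : AddMonoid.End (ℤ → ℤ → ℤ → A)) ^ N) g = 0 := by
      refine endPow_apply_zero _ hNab g ?_
      funext r m p
      show (((E1 - E2 : AddMonoid.End (ℤ → ℤ → ℤ → A)) ^ Nab) g) r m p = 0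
      rw [evalE12]
      have lhs_eq : ∑ s ∈ Finset.range (Nab + 1),
            ((-1 : ℤ) ^ s * (Nab.choose s : ℤ)) • g (r + (Nab : ℤ) - s) (m + s) p
          = (Rmul μ hadd1 (c p)) (∑ s ∈ Finset.range (Nab + 1),
            ((-1 : ℤ) ^ s * (Nab.choose s : ℤ)) • μ (a (r + (Nab : ℤ) - s)) (b (m + s))) := by
        rw [map_sum]
        exact Finset.sum_congr rfl fun s _ => by rw [map_zsmul]; rfl
      rw [lhs_eq, hab r m, map_zero]
    have h13 : ((E1 - E3 : AddMonoid.End (ℤ → ℤ → ℤ → A)) ^ N) g = 0 := by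
      refine endPow_apply_zero _ hNac g ?_
      funext r m p
      show (((E1 - E3 : AddMonoid.End (ℤ → ℤ → ℤ → A)) ^ Nac) g) r m p = 0
      rw [evalE13]
      have lhs_eq : ∑ s ∈ Finset.range (Nac + 1),
            ((-1 : ℤ) ^ s * (Nac.choose s : ℤ)) • g (r + (Nac : ℤ) - s) m (p + s)
          = (Lmul μ hadd2 (b m)) (∑ s ∈ Finset.range (Nac + 1),
            ((-1 : ℤ) ^ s * (Nac.choose s : ℤ)) • μ (a (r + (Nac : ℤ) - s)) (c (p + s))) := by
        rw [map_sum]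
        refine Finset.sum_congr rfl fun s _ => ?_
        rw [map_zsmul]
        exact congrArg _ (hperm _ _ _)
      rw [lhs_eq, hac r p, map_zero]
    have h23 : ((E2 - E3 : AddMonoid.End (ℤ → ℤ → ℤ → A)) ^ (2 * N)) g = 0 := by
      have hcomm : Commute (E1 - E3 : AddMonoid.End (ℤ → ℤ → ℤ → A)) (E1 - E2) :=
        Commute.sub_left ((Commute.refl E1).sub_right commE12)
          (commE13.symm.sub_right commE23.symm)
      have hEq : (E2 - E3 : AddMonoid.End (ℤ → ℤ → ℤ → A)) = (E1 - E3) - (E1 - E2) :=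
        (sub_sub_sub_cancel_left _ _ _).symm
      rw [hEq]
      exact kill_sub_pow hcomm N g h13 h12
    have key : ∀ (K : ℕ) (m p : ℤ),
        (((D1 - D2 : AddMonoid.End (ℤ → ℤ → A)) ^ K) (fun m p => μ (NthProduct μ n a b m) (c p))) m p
          = ∑ j ∈ Finset.range (n + 1), ((-1 : ℤ) ^ j * (n.choose j : ℤ)) •
              (((E2 - E3 : AddMonoid.End (ℤ → ℤ → ℤ → A)) ^ K) g) ((n : ℤ) - j) (m + j) p := by
      intro K
      induction K with
      | zero =>
        intro m p
        simp only [pow_zero, end_one_apply]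
        calc μ (NthProduct μ n a b m) (c p)
            = (Rmul μ hadd1 (c p)) (∑ j ∈ Finset.range (n + 1),
                ((-1 : ℤ) ^ j * (n.choose j : ℤ)) • μ (a ((n : ℤ) - j)) (b (m + j))) := by
              simp only [NthProduct]; rfl
          _ = ∑ j ∈ Finset.range (n + 1), ((-1 : ℤ) ^ j * (n.choose j : ℤ)) •
                g ((n : ℤ) - j) (m + j) p := by
              rw [map_sum]
              exact Finset.sum_congr rfl fun j _ => by rw [map_zsmul]; rfl
      | succ K ih =>
        intro m p
        rw [pow_succ', end_mul_apply, stepD, ih (m + 1) p, ih m (p + 1),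
          ← Finset.sum_sub_distrib]
        refine Finset.sum_congr rfl fun j hj => ?_
        rw [pow_succ', end_mul_apply, stepE23, smul_sub]
        have harg : m + 1 + (j : ℤ) = m + j + 1 := by ring
        rw [harg]
    refine ⟨2 * N, fun m p => ?_⟩
    have h0 : (((D1 - D2 : AddMonoid.End (ℤ → ℤ → A)) ^ (2 * N)) (fun m p => μ (NthProduct μ n a b m) (c p))) m p = 0 := by
      rw [key (2 * N) m p, h23]
      simp
    exact (evalD (2 * N) (fun m p => μ (NthProduct μ n a b m) (c p)) m p).symm.trans h0
  · -- locality of (c, a ∘ₙ b)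
    set g : ℤ → ℤ → ℤ → A := fun q r m => μ (c q) (μ (a r) (b m)) with hg
    have h12 : ((E1 - E2 : AddMonoid.End (ℤ → ℤ → ℤ → A)) ^ N) g = 0 := by
      refine endPow_apply_zero _ hNca g ?_
      funext q r m
      show (((E1 - E2 : AddMonoid.End (ℤ → ℤ → ℤ → A)) ^ Nca) g) q r m = 0
      rw [evalE12]
      have lhs_eq : ∑ s ∈ Finset.range (Nca + 1),
            ((-1 : ℤ) ^ s * (Nca.choose s : ℤ)) • g (q + (Nca : ℤ) - s) (r + s) m
          = (Rmul μ hadd1 (b m)) (∑ s ∈ Finset.range (Nca + 1),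
            ((-1 : ℤ) ^ s * (Nca.choose s : ℤ)) • μ (c (q + (Nca : ℤ) - s)) (a (r + s))) := by
        rw [map_sum]
        refine Finset.sum_congr rfl fun s _ => ?_
        rw [map_zsmul]
        exact congrArg _ (hassoc _ _ _).symm
      rw [lhs_eq, hca q r, map_zero]
    have h23 : ((E2 - E3 : AddMonoid.End (ℤ → ℤ → ℤ → A)) ^ N) g = 0 := by
      refine endPow_apply_zero _ hNab g ?_
      funext q r m
      show (((E2 - E3 : AddMonoid.End (ℤ → ℤ → ℤ → A)) ^ Nab) g) q r m = 0
      rw [evalE23]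
      have lhs_eq : ∑ s ∈ Finset.range (Nab + 1),
            ((-1 : ℤ) ^ s * (Nab.choose s : ℤ)) • g q (r + (Nab : ℤ) - s) (m + s)
          = (Lmul μ hadd2 (c q)) (∑ s ∈ Finset.range (Nab + 1),
            ((-1 : ℤ) ^ s * (Nab.choose s : ℤ)) • μ (a (r + (Nab : ℤ) - s)) (b (m + s))) := by
        rw [map_sum]
        exact Finset.sum_congr rfl fun s _ => by rw [map_zsmul]; rfl
      rw [lhs_eq, hab r m, map_zero]
    have h32 : ((E3 - E2 : AddMonoid.End (ℤ → ℤ → ℤ → A)) ^ N) g = 0 := by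
      rw [← neg_sub (E2 : AddMonoid.End (ℤ → ℤ → ℤ → A)) E3, neg_endPow_apply, h23, smul_zero]
    have h13 : ((E1 - E3 : AddMonoid.End (ℤ → ℤ → ℤ → A)) ^ (2 * N)) g = 0 := by
      have hcomm : Commute (E1 - E2 : AddMonoid.End (ℤ → ℤ → ℤ → A)) (E3 - E2) :=
        Commute.sub_left (commE13.sub_right commE12)
          (commE23.sub_right (Commute.refl E2))
      have hEq : (E1 - E3 : AddMonoid.End (ℤ → ℤ → ℤ → A)) = (E1 - E2) - (E3 - E2) :=
        (sub_sub_sub_cancel_right _ _ _).symm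
      rw [hEq]
      exact kill_sub_pow hcomm N g h12 h32
    have key : ∀ (K : ℕ) (m p : ℤ),
        (((D1 - D2 : AddMonoid.End (ℤ → ℤ → A)) ^ K) (fun m p => μ (c m) (NthProduct μ n a b p))) m p
          = ∑ j ∈ Finset.range (n + 1), ((-1 : ℤ) ^ j * (n.choose j : ℤ)) •
              (((E1 - E3 : AddMonoid.End (ℤ → ℤ → ℤ → A)) ^ K) g) m ((n : ℤ) - j) (p + j) := by
      intro K
      induction K with
      | zero =>
        intro m p
        simp only [pow_zero, end_one_apply]
        calc μ (c m) (NthProduct μ n a b p)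
            = (Lmul μ hadd2 (c m)) (∑ j ∈ Finset.range (n + 1),
                ((-1 : ℤ) ^ j * (n.choose j : ℤ)) • μ (a ((n : ℤ) - j)) (b (p + j))) := by
              simp only [NthProduct]; rfl
          _ = ∑ j ∈ Finset.range (n + 1), ((-1 : ℤ) ^ j * (n.choose j : ℤ)) •
                g m ((n : ℤ) - j) (p + j) := by
              rw [map_sum]
              exact Finset.sum_congr rfl fun j _ => by rw [map_zsmul]; rfl
      | succ K ih =>
        intro m p
        rw [pow_succ', end_mul_apply, stepD, ih (m + 1) p, ih m (p + 1),
          ← Finset.sum_sub_distrib]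
        refine Finset.sum_congr rfl fun j hj => ?_
        rw [pow_succ', end_mul_apply, stepE13, smul_sub]
        have harg : p + 1 + (j : ℤ) = p + j + 1 := by ring
        rw [harg]
    refine ⟨2 * N, fun m p => ?_⟩
    have h0 : (((D1 - D2 : AddMonoid.End (ℤ → ℤ → A)) ^ (2 * N)) (fun m p => μ (c m) (NthProduct μ n a b p))) m p = 0 := by
      rw [key (2 * N) m p, h13]
      simp
    exact (evalD (2 * N) (fun m p => μ (c m) (NthProduct μ n a b p)) m p).symm.trans h0
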